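/- Let ξ(x) = Σ_{p≥2} c_p² x^p with nonnegative coefficients, ξ ≠ x², and q ∈ (0,1). Then the function f₁(q,·): z ↦ −[qξ'(q)−ξ(q)](1−q)(1+z)/(ξ'(1)−ξ'(q)) − q²·log(q(ξ'(1)−ξ'(q))/((1+z)ξ'(q)(1−q))) + q² − 2ξ(q)q/ξ'(q) + ξ(q)q²(ξ'(1)−ξ'(q))/((1+z)ξ'(q)²(1−q)) defined on (−1,∞) has exactly two zeros, one strictly less than the local minimum point z₂ˢ(q) and the other equal to z₂ᵇ(q) = q(ξ'(1)−ξ'(q))/((1−q)ξ'(q)) − 1. -/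

import Mathlib

open Filter Set

theorem g_aux (al bet gam q2 us ub : ℝ) (hbet : 0 < bet) (hgam : 0 < gam)
    (hus : 0 < us) (husb : us < ub)
    (hsid : bet * (us + ub) = q2) (hpid : bet * (us * ub) = gam)
    (g : ℝ → ℝ) (hg : ∀ u : ℝ, g u = al - bet * u + q2 * Real.log u + gam / u)
    (hgub : g ub = 0) :
    ∃ u0 : ℝ, 0 < u0 ∧ u0 < us ∧ ∀ u : ℝ, 0 < u → (g u = 0 ↔ u = u0 ∨ u = ub) := by
  have hub : 0 < ub := hus.trans husb
  -- derivative
  have hder : ∀ u : ℝ, 0 < u → HasDerivAt g (-bet + q2 / u - gam / u ^ 2) u := by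
    intro u hu
    have h1 : HasDerivAt (fun x : ℝ => al - bet * x) (-bet) u := by
      simpa using ((hasDerivAt_id u).const_mul bet).const_sub al
    have h2 : HasDerivAt (fun x : ℝ => q2 * Real.log x) (q2 * u⁻¹) u :=
      (Real.hasDerivAt_log hu.ne').const_mul q2
    have h3 : HasDerivAt (fun x : ℝ => gam / x) (gam * (-(u ^ 2)⁻¹)) u := by
      simpa [div_eq_mul_inv] using (hasDerivAt_inv hu.ne').const_mul gam
    have h0 := (h1.add h2).add h3
    have heq : -bet + q2 * u⁻¹ + gam * (-(u ^ 2)⁻¹) = -bet + q2 / u - gam / u ^ 2 := by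
      field_simp
      ring
    rw [heq] at h0
    refine h0.congr_of_eventuallyEq ?_
    exact Filter.Eventually.of_forall fun x => by rw [hg x]; rfl
  have hfact : ∀ u : ℝ, 0 < u → -bet + q2 / u - gam / u ^ 2
      = -(bet * (u - us) * (u - ub)) / u ^ 2 := by
    intro u hu
    have hnum : -(bet * (u - us) * (u - ub)) = -(bet * u ^ 2) + q2 * u - gam := by
      linear_combination u * hsid - hpid
    rw [hnum]
    field_simp
  have hconts : ∀ s : Set ℝ, s ⊆ Set.Ioi (0:ℝ) → ContinuousOn g s := by
    intro s hs u hu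
    exact ((hder u (hs hu)).continuousAt).continuousWithinAt
  -- monotonicity
  have hanti1 : StrictAntiOn g (Set.Ioc 0 us) := by
    apply strictAntiOn_of_deriv_neg (convex_Ioc _ _)
      (hconts _ (fun x hx => hx.1))
    intro x hx
    rw [interior_Ioc] at hx
    rw [(hder x hx.1).deriv, hfact x hx.1]
    have h1 : 0 < (x - us) * (x - ub) :=
      mul_pos_of_neg_of_neg (by linarith [hx.2]) (by linarith [hx.2])
    have h2 : (0:ℝ) < x ^ 2 := pow_pos hx.1 2
    apply div_neg_of_neg_of_pos _ h2
    nlinarith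
  have hmono : StrictMonoOn g (Set.Icc us ub) := by
    apply strictMonoOn_of_deriv_pos (convex_Icc _ _)
      (hconts _ (fun x hx => lt_of_lt_of_le hus hx.1))
    intro x hx
    rw [interior_Icc] at hx
    have hx0 : 0 < x := hus.trans hx.1
    rw [(hder x hx0).deriv, hfact x hx0]
    have hp : 0 < bet * (x - us) := mul_pos hbet (by linarith [hx.1])
    have hneg : bet * (x - us) * (x - ub) < 0 := mul_neg_of_pos_of_neg hp (by linarith [hx.2])
    exact div_pos (by linarith) (by positivity)
  have hanti2 : StrictAntiOn g (Set.Ici ub) := by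
    apply strictAntiOn_of_deriv_neg (convex_Ici _)
      (hconts _ (fun x hx => lt_of_lt_of_le hub hx))
    intro x hx
    rw [interior_Ici] at hx
    have hx' : ub < x := hx
    have hx0 : 0 < x := hub.trans hx'
    rw [(hder x hx0).deriv, hfact x hx0]
    have h1 : 0 < bet * (x - us) * (x - ub) :=
      mul_pos (mul_pos hbet (by linarith)) (by linarith)
    have h2 : (0:ℝ) < x ^ 2 := by positivity
    apply div_neg_of_neg_of_pos _ h2
    linarith
  have hgus : g us < 0 := by
    have := hmono ⟨le_refl us, husb.le⟩ ⟨husb.le, le_refl ub⟩ husb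
    linarith [hgub]
  -- tendsto atTop at 0+
  have htop : Tendsto g (nhdsWithin 0 (Set.Ioi 0)) atTop := by
    have h1 : Tendsto (fun u : ℝ => al - bet * u) (nhdsWithin 0 (Set.Ioi 0)) (nhds (al - bet * 0)) :=
      ((continuous_const.sub (continuous_const.mul continuous_id)).tendsto 0).mono_left
        nhdsWithin_le_nhds
    have h2 : Tendsto (fun u : ℝ => q2 * Real.log u + gam / u) (nhdsWithin 0 (Set.Ioi 0)) atTop := by
      have hnum : Tendsto (fun u : ℝ => q2 * (Real.log u * u) + gam)
          (nhdsWithin 0 (Set.Ioi 0)) (nhds (q2 * 0 + gam)) := by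
        have := tendsto_log_mul_rpow_nhdsGT_zero (r := 1) one_pos
        simp only [Real.rpow_one] at this
        exact ((this.const_mul q2).add tendsto_const_nhds)
      have hinv : Tendsto (fun u : ℝ => u⁻¹) (nhdsWithin 0 (Set.Ioi 0)) atTop :=
        tendsto_inv_nhdsGT_zero
      have hmul := Filter.Tendsto.pos_mul_atTop (by simpa using hgam) hnum hinv
      refine hmul.congr' ?_
      filter_upwards [self_mem_nhdsWithin] with u hu
      have hu0 : u ≠ 0 := ne_of_gt hu
      field_simp
    have hsum' := Filter.Tendsto.add_atTop h1 h2
    refine hsum'.congr (fun u => ?_)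
    rw [hg u]; ring
  -- find u1 with g u1 > 0, 0 < u1 < us
  have hev : ∀ᶠ u in nhdsWithin (0:ℝ) (Set.Ioi 0), 0 < g u :=
    htop.eventually (Filter.eventually_gt_atTop 0)
  have hev2 : Set.Ioo (0:ℝ) us ∈ nhdsWithin (0:ℝ) (Set.Ioi 0) :=
    Ioo_mem_nhdsGT_of_mem ⟨le_refl 0, hus⟩
  obtain ⟨u1, hu1g, hu1mem⟩ := (hev.and (Filter.eventually_of_mem hev2 fun x hx => hx)).exists
  -- IVT on [u1, us]
  have hsub : Set.Icc u1 us ⊆ Set.Ioi (0:ℝ) := fun x hx => lt_of_lt_of_le hu1mem.1 hx.1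
  have hivt := intermediate_value_Ioo' hu1mem.2.le (hconts _ hsub)
  have h0mem : (0:ℝ) ∈ Set.Ioo (g us) (g u1) := ⟨hgus, hu1g⟩
  obtain ⟨u0, hu0mem, hu0⟩ := hivt h0mem
  have hu0pos : 0 < u0 := hu1mem.1.trans hu0mem.1
  have hu0lt : u0 < us := hu0mem.2
  refine ⟨u0, hu0pos, hu0lt, ?_⟩
  intro u hu
  constructor
  · intro hgu
    by_contra hcon
    push_neg at hcon
    obtain ⟨hne0, hneb⟩ := hcon
    rcases lt_trichotomy u us with h | h | h
    · have : u = u0 := hanti1.injOn ⟨hu, h.le⟩ ⟨hu0pos, hu0lt.le⟩ (by rw [hgu, hu0])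
      exact hne0 this
    · rw [h] at hgu; linarith
    · rcases lt_trichotomy u ub with h2 | h2 | h2
      · have := hmono ⟨h.le, h2.le⟩ ⟨husb.le, le_refl ub⟩ h2
        linarith
      · exact hneb h2
      · have := hanti2 (le_refl ub) h2.le h2
        linarith
  · rintro (rfl | rfl)
    · exact hu0
    · exact hgub

theorem f1_aux (q X P B : ℝ) (hq : 0 < q) (hq1 : q < 1)
    (hX : 0 < X) (hP : 0 < P) (hB : 0 < B) (h2X : 2 * X < q * P)
    (f1 : ℝ → ℝ)
    (hf1 : ∀ z : ℝ, f1 z =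
      -((q * P - X) * (1 - q) * (1 + z) / B)
        - q ^ 2 * Real.log (q * B / ((1 + z) * P * (1 - q)))
        + q ^ 2 - 2 * X * q / P
        + X * q ^ 2 * B / ((1 + z) * P ^ 2 * (1 - q)))
    (z2s z2b : ℝ)
    (hz2s : z2s = q * X * B / (P * (q * P - X) * (1 - q)) - 1)
    (hz2b : z2b = q * B / ((1 - q) * P) - 1) :
    ∃ z0 : ℝ, -1 < z0 ∧ z0 < z2s ∧
      ∀ z : ℝ, -1 < z → (f1 z = 0 ↔ z = z0 ∨ z = z2b) := by
  have h1q : (0:ℝ) < 1 - q := by linarith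
  have hA : 0 < q * P - X := by linarith
  have hXA : X < q * P - X := by linarith
  set A : ℝ := q * P - X with hA_def
  set bet : ℝ := A * (1 - q) / B with hbet_def
  set gam : ℝ := X * q ^ 2 * B / (P ^ 2 * (1 - q)) with hgam_def
  set us : ℝ := q * X * B / (P * A * (1 - q)) with hus_def
  set ub : ℝ := q * B / ((1 - q) * P) with hub_def
  set al : ℝ := -(q ^ 2) * Real.log ub + q ^ 2 - 2 * X * q / P with hal_def
  have hbet : 0 < bet := by rw [hbet_def]; positivity
  have hgam : 0 < gam := by rw [hgam_def]; positivity
  have hus : 0 < us := by rw [hus_def]; positivity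
  have hub : 0 < ub := by rw [hub_def]; positivity
  have husb : us < ub := by
    rw [hus_def, hub_def, div_lt_div_iff₀ (by positivity) (by positivity)]
    have hpos : 0 < q * B * ((1 - q) * P) := by positivity
    calc q * X * B * ((1 - q) * P) = X * (q * B * ((1 - q) * P)) := by ring
      _ < A * (q * B * ((1 - q) * P)) := by
          exact mul_lt_mul_of_pos_right hXA hpos
      _ = q * B * (P * A * (1 - q)) := by ring
  have hsid : bet * (us + ub) = q ^ 2 := by
    rw [hbet_def, hus_def, hub_def, hA_def]
    field_simp [show q * P - X ≠ 0 from hA.ne']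
    ring
  have hpid : bet * (us * ub) = gam := by
    rw [hbet_def, hus_def, hub_def, hgam_def, hA_def]
    field_simp [show q * P - X ≠ 0 from hA.ne']
  set g : ℝ → ℝ := fun u => al - bet * u + q ^ 2 * Real.log u + gam / u with hg_def
  have hfg : ∀ z : ℝ, -1 < z → f1 z = g (1 + z) := by
    intro z hz
    have hz0 : (0:ℝ) < 1 + z := by linarith
    have hlog : q * B / ((1 + z) * P * (1 - q)) = ub / (1 + z) := by
      rw [hub_def]
      field_simp
    rw [hf1 z, hlog, Real.log_div hub.ne' hz0.ne']
    show _ = al - bet * (1 + z) + q ^ 2 * Real.log (1 + z) + gam / (1 + z)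
    rw [hal_def, hbet_def, hgam_def, hA_def]
    field_simp
    ring
  have hgub : g ub = 0 := by
    have hbu : bet * ub = q ^ 2 - X * q / P := by
      rw [hbet_def, hub_def, hA_def]
      field_simp
    have hgu : gam / ub = X * q / P := by
      rw [hgam_def, hub_def]
      field_simp
    show al - bet * ub + q ^ 2 * Real.log ub + gam / ub = 0
    rw [hbu, hgu, hal_def]
    ring
  obtain ⟨u0, hu0pos, hu0lt, hcl⟩ :=
    g_aux al bet gam (q ^ 2) us ub hbet hgam hus husb hsid hpid g (fun u => rfl) hgub
  refine ⟨u0 - 1, by linarith, by rw [hz2s]; linarith, ?_⟩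
  intro z hz
  rw [hfg z hz, hcl (1 + z) (by linarith), hz2b]
  constructor
  · rintro (h | h)
    · left; linarith
    · right; linarith
  · rintro (h | h)
    · left; linarith
    · right; linarith

/-- For `ξ(x) = ∑_{p≥2} c_p x^p` with nonnegative coefficients, `ξ ≠ x²`, `q ∈ (0,1)`,
the function `f₁(q,·)` on `(−1,∞)` has exactly two zeros: one strictly less than the local
minimum point `z₂ˢ(q)` and the other equal to `z₂ᵇ(q) = q(ξ'(1)−ξ'(q))/((1−q)ξ'(q)) − 1`. -/
theorem f1_two_zeros
    (c : ℕ → ℝ) (hc : ∀ p, 0 ≤ c p) (hc0 : c 0 = 0) (hc1 : c 1 = 0)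
    (hsum : Summable (fun p : ℕ => (2 : ℝ) ^ p * c p))
    (hne : ∃ p : ℕ, 3 ≤ p ∧ 0 < c p)
    (xi xi' : ℝ → ℝ)
    (hxi : ∀ x : ℝ, xi x = ∑' p : ℕ, c p * x ^ p)
    (hxi' : ∀ x : ℝ, xi' x = ∑' p : ℕ, (p : ℝ) * c p * x ^ (p - 1))
    (q : ℝ) (hq : 0 < q) (hq1 : q < 1)
    (f1 : ℝ → ℝ)
    (hf1 : ∀ z : ℝ, f1 z =
      -((q * xi' q - xi q) * (1 - q) * (1 + z) / (xi' 1 - xi' q))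
        - q ^ 2 * Real.log (q * (xi' 1 - xi' q) / ((1 + z) * xi' q * (1 - q)))
        + q ^ 2 - 2 * xi q * q / xi' q
        + xi q * q ^ 2 * (xi' 1 - xi' q) / ((1 + z) * xi' q ^ 2 * (1 - q)))
    (z2s z2b : ℝ)
    (hz2s : z2s = q * xi q * (xi' 1 - xi' q) / (xi' q * (q * xi' q - xi q) * (1 - q)) - 1)
    (hz2b : z2b = q * (xi' 1 - xi' q) / ((1 - q) * xi' q) - 1) :
    ∃ z0 : ℝ, -1 < z0 ∧ z0 < z2s ∧
      ∀ z : ℝ, -1 < z → (f1 z = 0 ↔ z = z0 ∨ z = z2b) := by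
  obtain ⟨p₀, hp3, hp₀⟩ := hne
  have hq0 : (0:ℝ) ≤ q := hq.le
  have hqle1 : q ≤ 1 := hq1.le
  have h2pow : ∀ p : ℕ, (p : ℝ) ≤ 2 ^ p := by
    intro p
    exact_mod_cast (Nat.lt_two_pow_self (n := p)).le
  have hone : ∀ p : ℕ, (1:ℝ) ≤ 2 ^ p := fun p => one_le_pow₀ (by norm_num)
  have hqp : ∀ p : ℕ, (0:ℝ) ≤ q ^ p := fun p => pow_nonneg hq0 p
  have hqple : ∀ p : ℕ, q ^ p ≤ 1 := fun p => pow_le_one₀ hq0 hqle1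
  -- summability facts
  have hSX : Summable (fun p : ℕ => c p * q ^ p) := by
    refine Summable.of_nonneg_of_le (fun p => mul_nonneg (hc p) (hqp p)) (fun p => ?_) hsum
    calc c p * q ^ p ≤ c p * 1 := mul_le_mul_of_nonneg_left (hqple p) (hc p)
      _ = 1 * c p := by ring
      _ ≤ 2 ^ p * c p := mul_le_mul_of_nonneg_right (hone p) (hc p)
  have hSP : Summable (fun p : ℕ => (p : ℝ) * c p * q ^ (p - 1)) := by
    refine Summable.of_nonneg_of_le
      (fun p => mul_nonneg (mul_nonneg (Nat.cast_nonneg p) (hc p)) (hqp _)) (fun p => ?_) hsum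
    calc (p : ℝ) * c p * q ^ (p - 1) ≤ (p : ℝ) * c p * 1 :=
        mul_le_mul_of_nonneg_left (hqple _) (mul_nonneg (Nat.cast_nonneg p) (hc p))
      _ = (p : ℝ) * c p := by ring
      _ ≤ 2 ^ p * c p := mul_le_mul_of_nonneg_right (h2pow p) (hc p)
  have hSP1 : Summable (fun p : ℕ => (p : ℝ) * c p * (1:ℝ) ^ (p - 1)) := by
    refine Summable.of_nonneg_of_le
      (fun p => by simp [mul_nonneg, Nat.cast_nonneg, hc p]) (fun p => ?_) hsum
    simp only [one_pow, mul_one]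
    exact mul_le_mul_of_nonneg_right (h2pow p) (hc p)
  have hSpq : Summable (fun p : ℕ => (p : ℝ) * c p * q ^ p) := by
    refine Summable.of_nonneg_of_le
      (fun p => mul_nonneg (mul_nonneg (Nat.cast_nonneg p) (hc p)) (hqp _)) (fun p => ?_) hsum
    calc (p : ℝ) * c p * q ^ p ≤ (p : ℝ) * c p * 1 :=
        mul_le_mul_of_nonneg_left (hqple _) (mul_nonneg (Nat.cast_nonneg p) (hc p))
      _ = (p : ℝ) * c p := by ring
      _ ≤ 2 ^ p * c p := mul_le_mul_of_nonneg_right (h2pow p) (hc p)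
  -- positivity of xi q
  have hX : 0 < xi q := by
    rw [hxi]
    have hle := Summable.le_tsum hSX p₀ (fun j _ => mul_nonneg (hc j) (hqp j))
    have : 0 < c p₀ * q ^ p₀ := mul_pos hp₀ (pow_pos hq p₀)
    linarith
  have hP : 0 < xi' q := by
    rw [hxi']
    have hle := Summable.le_tsum hSP p₀
      (fun j _ => mul_nonneg (mul_nonneg (Nat.cast_nonneg j) (hc j)) (hqp _))
    have h3 : (0:ℝ) < (p₀ : ℝ) := by
      have : 0 < p₀ := by omega
      exact_mod_cast this
    have : 0 < (p₀ : ℝ) * c p₀ * q ^ (p₀ - 1) := by positivity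
    linarith
  have hB : 0 < xi' 1 - xi' q := by
    rw [hxi' 1, hxi' q, ← Summable.tsum_sub hSP1 hSP]
    have hterm : ∀ j : ℕ, 0 ≤ (j : ℝ) * c j * (1:ℝ) ^ (j - 1) - (j : ℝ) * c j * q ^ (j - 1) := by
      intro j
      have : q ^ (j - 1) ≤ (1:ℝ) ^ (j - 1) := by
        rw [one_pow]; exact hqple _
      have hnn : (0:ℝ) ≤ (j : ℝ) * c j := mul_nonneg (Nat.cast_nonneg j) (hc j)
      nlinarith
    have hle := Summable.le_tsum (hSP1.sub hSP) p₀ (fun j _ => hterm j)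
    have hppos : (0:ℝ) < (p₀ : ℝ) := by
      have : 0 < p₀ := by omega
      exact_mod_cast this
    have hlt : q ^ (p₀ - 1) < (1:ℝ) ^ (p₀ - 1) := by
      rw [one_pow]
      exact pow_lt_one₀ hq0 hq1 (by omega)
    have : 0 < (p₀ : ℝ) * c p₀ * (1:ℝ) ^ (p₀ - 1) - (p₀ : ℝ) * c p₀ * q ^ (p₀ - 1) := by
      have hpc : 0 < (p₀ : ℝ) * c p₀ := mul_pos hppos hp₀
      nlinarith
    linarith
  -- q * xi' q = ∑ p c p q^p
  have hqP : q * xi' q = ∑' p : ℕ, (p : ℝ) * c p * q ^ p := by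
    rw [hxi', ← tsum_mul_left]
    refine tsum_congr fun p => ?_
    cases p with
    | zero => simp
    | succ n =>
      simp only [Nat.add_sub_cancel]
      rw [pow_succ]
      ring
  have h2X : 2 * xi q < q * xi' q := by
    have hkey : q * xi' q - 2 * xi q
        = ∑' p : ℕ, ((p : ℝ) * c p * q ^ p - 2 * (c p * q ^ p)) := by
      rw [hqP, hxi, ← tsum_mul_left, ← Summable.tsum_sub hSpq (hSX.mul_left 2)]
    have hterm : ∀ j : ℕ, 0 ≤ (j : ℝ) * c j * q ^ j - 2 * (c j * q ^ j) := by
      intro j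
      match j with
      | 0 => simp [hc0]
      | 1 => simp [hc1]
      | (n+2) =>
        have h2 : (2:ℝ) ≤ ((n+2 : ℕ) : ℝ) := by exact_mod_cast Nat.le_add_left 2 n
        have hnn : 0 ≤ c (n+2) * q ^ (n+2) := mul_nonneg (hc _) (hqp _)
        nlinarith
    have hle := Summable.le_tsum (hSpq.sub (hSX.mul_left 2)) p₀ (fun j _ => hterm j)
    have hppos : (3:ℝ) ≤ (p₀ : ℝ) := by exact_mod_cast hp3
    have hpos : 0 < (p₀ : ℝ) * c p₀ * q ^ p₀ - 2 * (c p₀ * q ^ p₀) := by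
      have := mul_pos hp₀ (pow_pos hq p₀)
      nlinarith
    linarith [hkey ▸ (hle.trans_eq rfl)]
  exact f1_aux q (xi q) (xi' q) (xi' 1 - xi' q) hq hq1 hX hP hB h2X f1 hf1 z2s z2b hz2s hz2b
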